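/- Let F be a field and let A ∈ SL_2(F) be a nonscalar matrix. Then A is a commutator of unipotent matrices of index 2 if and only if tr(A) = 2 + α² for some nonzero α ∈ F. -/

import Mathlib

open Matrix

variable {F : Type*} [Field F]

/-- A unipotent matrix of index 2: `A ≠ I` and `(A - I)² = 0`. -/
def IsU2 {m : Type*} [Fintype m] [DecidableEq m] (A : Matrix m m F) : Prop :=
  A ≠ 1 ∧ (A - 1) ^ 2 = 0

/-- A commutator `X * Y * X⁻¹ * Y⁻¹` of unipotent matrices of index 2. -/
def IsCommU2 {m : Type*} [Fintype m] [DecidableEq m] (A : Matrix m m F) : Prop :=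
  ∃ X Y : Matrix m m F, IsU2 X ∧ IsU2 Y ∧ A = X * Y * X⁻¹ * Y⁻¹

/-- `A` is a product of at most `k` commutators of unipotent matrices of index 2. -/
def IsProdCommU2 {m : Type*} [Fintype m] [DecidableEq m] (k : ℕ) (A : Matrix m m F) : Prop :=
  ∃ L : List (Matrix m m F), L.length ≤ k ∧ (∀ B ∈ L, IsCommU2 B) ∧ L.prod = A

/-- `A` is a product of at most `k` unipotent matrices of index 2. -/
def IsProdU2 {m : Type*} [Fintype m] [DecidableEq m] (k : ℕ) (A : Matrix m m F) : Prop :=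
  ∃ L : List (Matrix m m F), L.length ≤ k ∧ (∀ B ∈ L, IsU2 B) ∧ L.prod = A

lemma right_inv_of_sq {X : Matrix (Fin 2) (Fin 2) F} (h : (X - 1)^2 = 0) :
    X * (1 + 1 - X) = 1 := by
  have e : X * (1 + 1 - X) = 1 - (X - 1)^2 := by noncomm_ring
  rw [e, h, sub_zero]

lemma inv_of_sq {X : Matrix (Fin 2) (Fin 2) F} (h : (X - 1)^2 = 0) :
    X⁻¹ = 1 + 1 - X :=
  Matrix.inv_eq_right_inv (right_inv_of_sq h)

lemma isU2_conj {X R S : Matrix (Fin 2) (Fin 2) F} (hX : IsU2 X)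
    (hRS : R * S = 1) (hSR : S * R = 1) : IsU2 (R * X * S) := by
  constructor
  · intro h
    have key : S * (R * X * S) * R = X := by
      have e : S * (R * X * S) * R = (S*R) * X * (S*R) := by noncomm_ring
      rw [e, hSR, one_mul, mul_one]
    rw [h] at key
    apply hX.1
    rw [← key, mul_one, hSR]
  · have e : R*(X-1)*S = R*X*S - R*S := by noncomm_ring
    rw [hRS] at e
    rw [← e]
    have e2 : (R*(X-1)*S)^2 = R*((X-1)*(S*R)*(X-1))*S := by noncomm_ring
    rw [e2, hSR, mul_one, ← sq, hX.2, mul_zero, zero_mul]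

lemma isCommU2_conj {A R S : Matrix (Fin 2) (Fin 2) F} (hRS : R * S = 1) (hSR : S * R = 1)
    (h : IsCommU2 A) : IsCommU2 (R * A * S) := by
  obtain ⟨X, Y, hX, hY, rfl⟩ := h
  have hXi := inv_of_sq hX.2
  have hYi := inv_of_sq hY.2
  refine ⟨R*X*S, R*Y*S, isU2_conj hX hRS hSR, isU2_conj hY hRS hSR, ?_⟩
  have hXinv : (R*X*S)⁻¹ = R * X⁻¹ * S := by
    apply Matrix.inv_eq_right_inv
    have e : (R*X*S) * (R*X⁻¹*S) = R*(X*(S*R)*X⁻¹)*S := by noncomm_ring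
    rw [e, hSR, mul_one, hXi, right_inv_of_sq hX.2, mul_one, hRS]
  have hYinv : (R*Y*S)⁻¹ = R * Y⁻¹ * S := by
    apply Matrix.inv_eq_right_inv
    have e : (R*Y*S) * (R*Y⁻¹*S) = R*(Y*(S*R)*Y⁻¹)*S := by noncomm_ring
    rw [e, hSR, mul_one, hYi, right_inv_of_sq hY.2, mul_one, hRS]
  rw [hXinv, hYinv]
  have e : (R*X*S)*(R*Y*S)*(R*X⁻¹*S)*(R*Y⁻¹*S)
      = R*(X*(S*R)*Y*(S*R)*X⁻¹*(S*R)*Y⁻¹)*S := by noncomm_ring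
  rw [e, hSR]
  noncomm_ring

lemma u2_form {X : Matrix (Fin 2) (Fin 2) F} (hX : IsU2 X) :
    ∃ a b c : F, a^2 + b*c = 0 ∧ ¬(a = 0 ∧ b = 0 ∧ c = 0) ∧ X = !![1+a, b; c, 1-a] := by
  obtain ⟨h1, h2⟩ := hX
  set a := X 0 0 - 1 with ha
  set b := X 0 1 with hb
  set c := X 1 0 with hc
  set d := X 1 1 - 1 with hd
  have hsub : X - 1 = !![a, b; c, d] := by
    ext i j
    fin_cases i <;> fin_cases j <;>
      simp [ha, hb, hc, hd, Matrix.sub_apply, Matrix.one_apply]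
  rw [hsub, sq, Matrix.mul_fin_two] at h2
  have e00 : a*a + b*c = 0 := by have := congrFun (congrFun h2 0) 0; simpa using this
  have e01 : a*b + b*d = 0 := by have := congrFun (congrFun h2 0) 1; simpa using this
  have e10 : c*a + d*c = 0 := by have := congrFun (congrFun h2 1) 0; simpa using this
  have e11 : c*b + d*d = 0 := by have := congrFun (congrFun h2 1) 1; simpa using this
  have hda : d = -a := by
    by_cases had : a + d = 0
    · linear_combination had
    · exfalso
      have hb0 : b = 0 := by
        rcases mul_eq_zero.mp (show b * (a + d) = 0 by linear_combination e01) with h | h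
        · exact h
        · exact absurd h had
      have hc0 : c = 0 := by
        rcases mul_eq_zero.mp (show c * (a + d) = 0 by linear_combination e10) with h | h
        · exact h
        · exact absurd h had
      have ha0 : a = 0 := by
        have : a^2 = 0 := by linear_combination e00 - c*hb0
        exact pow_eq_zero_iff (two_ne_zero) |>.mp this
      have hd0 : d = 0 := by
        have : d^2 = 0 := by linear_combination e11 - b*hc0
        exact pow_eq_zero_iff (two_ne_zero) |>.mp this
      exact had (by rw [ha0, hd0, add_zero])
  refine ⟨a, b, c, by linear_combination e00, ?_, ?_⟩
  · rintro ⟨ha0, hb0, hc0⟩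
    apply h1
    have hX1 : X - 1 = 0 := by
      rw [hsub, ha0, hb0, hc0, hda, ha0]
      ext i j
      fin_cases i <;> fin_cases j <;> simp
    exact sub_eq_zero.mp hX1
  · have : X = (X - 1) + 1 := by rw [sub_add_cancel]
    rw [this, hsub, hda]
    ext i j
    fin_cases i <;> fin_cases j <;> simp [Matrix.add_apply, Matrix.one_apply] <;> ring

lemma trace_comm {a b c e f g : F} (hp : a^2 + b*c = 0) (hq : e^2 + f*g = 0) :
    (!![1+a,b;c,1-a] * !![1+e,f;g,1-e] * !![1-a,-b;-c,1+a] * !![1-e,-f;-g,1+e]).trace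
      = 2 + (2*a*e + b*g + c*f)^2 := by
  simp only [Matrix.mul_fin_two, Matrix.trace_fin_two_of]
  linear_combination (-2 - 2*f*g - 2*e^2) * hp + (-2) * hq

lemma cyclic (A : Matrix (Fin 2) (Fin 2) F) (hdet : A.det = 1) (hns : ∀ c : F, A ≠ c • 1) :
    ∃ P S : Matrix (Fin 2) (Fin 2) F,
      P * S = 1 ∧ S * P = 1 ∧ A = P * !![0, -1; 1, A 0 0 + A 1 1] * S := by
  rw [Matrix.det_fin_two] at hdet
  by_cases hc : A 1 0 ≠ 0
  · refine ⟨!![1, A 0 0; 0, A 1 0], !![1, -(A 0 0/A 1 0); 0, 1/A 1 0], ?_, ?_, ?_⟩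
    · ext i j
      fin_cases i <;> fin_cases j <;>
        simp [Matrix.mul_apply, Fin.sum_univ_two, Matrix.one_apply] <;> field_simp <;> ring
    · ext i j
      fin_cases i <;> fin_cases j <;>
        simp [Matrix.mul_apply, Fin.sum_univ_two, Matrix.one_apply] <;> field_simp <;> ring
    · ext i j
      fin_cases i <;> fin_cases j <;>
        simp [Matrix.mul_apply, Fin.sum_univ_two] <;> field_simp
      · linear_combination (-1 : F) * hdet
      · ring
  · push_neg at hc
    by_cases hb : A 0 1 ≠ 0
    · refine ⟨!![0, A 0 1; 1, A 1 1], !![-(A 1 1/A 0 1), 1; 1/A 0 1, 0], ?_, ?_, ?_⟩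
      · ext i j
        fin_cases i <;> fin_cases j <;>
          simp [Matrix.mul_apply, Fin.sum_univ_two, Matrix.one_apply] <;> field_simp <;> ring
      · ext i j
        fin_cases i <;> fin_cases j <;>
          simp [Matrix.mul_apply, Fin.sum_univ_two, Matrix.one_apply] <;> field_simp <;> ring
      · ext i j
        fin_cases i <;> fin_cases j <;>
          simp [Matrix.mul_apply, Fin.sum_univ_two] <;> field_simp
        · ring
        · linear_combination (-1 : F) * hdet
    · push_neg at hb
      have had : A 1 1 - A 0 0 ≠ 0 := by
        intro h
        apply hns (A 0 0)
        have h' : A 1 1 = A 0 0 := by linear_combination h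
        ext i j
        fin_cases i <;> fin_cases j <;>
          simp [Matrix.smul_apply, Matrix.one_apply, hb, hc, h']
      have hd1 : A 0 0 * A 1 1 = 1 := by linear_combination hdet + A 1 0 * hb
      refine ⟨!![1, A 0 0; 1, A 1 1],
        !![A 1 1/(A 1 1 - A 0 0), -(A 0 0/(A 1 1 - A 0 0));
           -(1/(A 1 1 - A 0 0)), 1/(A 1 1 - A 0 0)], ?_, ?_, ?_⟩
      · ext i j
        fin_cases i <;> fin_cases j <;>
          simp [Matrix.mul_apply, Fin.sum_univ_two, Matrix.one_apply] <;>
          field_simp <;> ring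
      · ext i j
        fin_cases i <;> fin_cases j <;>
          simp [Matrix.mul_apply, Fin.sum_univ_two, Matrix.one_apply] <;>
          field_simp <;> ring
      · ext i j
        fin_cases i <;> fin_cases j <;>
          simp [Matrix.mul_apply, Fin.sum_univ_two, hb, hc] <;> field_simp
        · linear_combination hd1
        · linear_combination (-1 : F) * hd1
        · linear_combination hd1
        · linear_combination (-1 : F) * hd1

theorem stmt5 {F : Type*} [Field F] (A : Matrix (Fin 2) (Fin 2) F) (hA : A.det = 1)
    (hns : ∀ c : F, A ≠ c • 1) :
    IsCommU2 A ↔ ∃ α : F, α ≠ 0 ∧ A.trace = 2 + α ^ 2 := by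
  constructor
  · rintro ⟨X, Y, hXu, hYu, hAeq⟩
    obtain ⟨a, b, c, hp, hXnz, hXe⟩ := u2_form hXu
    obtain ⟨e, f, g, hq, hYnz, hYe⟩ := u2_form hYu
    have hXinv : X⁻¹ = 1 + 1 - X := inv_of_sq hXu.2
    have hYinv : Y⁻¹ = 1 + 1 - Y := inv_of_sq hYu.2
    have hXi : (1 + 1 - X : Matrix (Fin 2) (Fin 2) F) = !![1-a, -b; -c, 1+a] := by
      rw [hXe]; ext i j
      fin_cases i <;> fin_cases j <;>
        simp [Matrix.sub_apply, Matrix.add_apply, Matrix.one_apply] <;> ring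
    have hYi : (1 + 1 - Y : Matrix (Fin 2) (Fin 2) F) = !![1-e, -f; -g, 1+e] := by
      rw [hYe]; ext i j
      fin_cases i <;> fin_cases j <;>
        simp [Matrix.sub_apply, Matrix.add_apply, Matrix.one_apply] <;> ring
    refine ⟨2*a*e + b*g + c*f, ?_, ?_⟩
    · -- nonzero
      intro hτ
      obtain ⟨l, hle, hlf, hlg⟩ : ∃ l : F, e = l*a ∧ f = l*b ∧ g = l*c := by
        by_cases hb : b = 0
        · have ha0 : a = 0 := by
            have h2 : a^2 = 0 := by linear_combination hp - c*hb
            exact pow_eq_zero_iff two_ne_zero |>.mp h2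
          have hc0 : c ≠ 0 := fun hcc => hXnz ⟨ha0, hb, hcc⟩
          have hf0 : f = 0 := by
            have h2 : c * f = 0 := by linear_combination hτ - 2*e*ha0 - g*hb
            exact (mul_eq_zero.mp h2).resolve_left hc0
          have he0 : e = 0 := by
            have h2 : e^2 = 0 := by linear_combination hq - g*hf0
            exact pow_eq_zero_iff two_ne_zero |>.mp h2
          exact ⟨g/c, by rw [he0, ha0, mul_zero], by rw [hf0, hb, mul_zero],
            by field_simp⟩
        · by_cases hf : f = 0
          · have he0 : e = 0 := by
              have h2 : e^2 = 0 := by linear_combination hq - g*hf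
              exact pow_eq_zero_iff two_ne_zero |>.mp h2
            have hg0 : g = 0 := by
              have h2 : b * g = 0 := by linear_combination hτ - 2*a*he0 - c*hf
              exact (mul_eq_zero.mp h2).resolve_left hb
            exact absurd ⟨he0, hf, hg0⟩ hYnz
          · have key : (b*e - a*f)^2 = 0 := by
              linear_combination b^2*hq + f^2*hp - b*f*hτ
            have hbe : b*e = a*f := by
              have := pow_eq_zero_iff two_ne_zero |>.mp key
              linear_combination this
            refine ⟨f/b, ?_, by field_simp, ?_⟩
            · field_simp
              linear_combination hbe
            · have h5 : b*(b*g - c*f) = 0 := by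
                linear_combination b*hτ - 2*a*hbe - 2*f*hp
              have h6 := (mul_eq_zero.mp h5).resolve_left hb
              field_simp
              linear_combination h6
      -- now X and Y commute, so A = 1
      have hYX : Y * X = X * Y := by
        rw [hXe, hYe]
        ext i j
        fin_cases i <;> fin_cases j <;>
          simp [Matrix.mul_apply, Fin.sum_univ_two]
        · linear_combination c*hlf - b*hlg
        · linear_combination (2*b)*hle - (2*a)*hlf
        · linear_combination (2*a)*hlg - (2*c)*hle
        · linear_combination b*hlg - c*hlf
      have hA1 : A = 1 := by
        rw [hAeq, hXinv, hYinv]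
        have e1 : X*Y*(1+1-X)*(1+1-Y) = Y*(X*(1+1-X))*(1+1-Y) := by
          rw [← hYX]; noncomm_ring
        rw [e1, right_inv_of_sq hXu.2, mul_one, right_inv_of_sq hYu.2]
      exact hns 1 (by rw [hA1, one_smul])
    · rw [hAeq, hXinv, hYinv, hXi, hYi, hXe, hYe]
      exact trace_comm hp hq
  · rintro ⟨α, hα, htr⟩
    have htr' : A 0 0 + A 1 1 = 2 + α^2 := by
      rw [← Matrix.trace_fin_two]; exact htr
    set K : Matrix (Fin 2) (Fin 2) F := !![1+α+α^2, -α^2; α, 1-α] with hK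
    have hKdet : K.det = 1 := by rw [hK, Matrix.det_fin_two_of]; ring
    have hKns : ∀ c : F, K ≠ c • 1 := by
      intro c h
      apply hα
      have h2 := congrFun (congrFun h 1) 0
      simpa [hK, Matrix.smul_apply, Matrix.one_apply] using h2
    obtain ⟨P, S, hPS, hSP, hAe⟩ := cyclic A hA hns
    obtain ⟨Q, T, hQT, hTQ, hKe⟩ := cyclic K hKdet hKns
    have hKtr : K 0 0 + K 1 1 = A 0 0 + A 1 1 := by
      rw [htr', hK]; simp; ring
    rw [hKtr] at hKe
    have hC : (!![0, -1; 1, A 0 0 + A 1 1] : Matrix (Fin 2) (Fin 2) F) = T * K * Q := by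
      rw [hKe]
      have e1 : T*(Q * !![0, -1; 1, A 0 0 + A 1 1] * T)*Q
          = (T*Q) * !![0, -1; 1, A 0 0 + A 1 1] * (T*Q) := by noncomm_ring
      rw [e1, hTQ, one_mul, mul_one]
    have hA2 : A = (P*T) * K * (Q*S) := by rw [hAe, hC]; noncomm_ring
    have hR : (P*T)*(Q*S) = 1 := by
      have e1 : (P*T)*(Q*S) = P*(T*Q)*S := by noncomm_ring
      rw [e1, hTQ, mul_one, hPS]
    have hR' : (Q*S)*(P*T) = 1 := by
      have e1 : (Q*S)*(P*T) = Q*(S*P)*T := by noncomm_ring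
      rw [e1, hSP, mul_one, hQT]
    rw [hA2]
    apply isCommU2_conj hR hR'
    -- K is a commutator of U2 matrices
    have hX0inv : (!![1, α; 0, 1] : Matrix (Fin 2) (Fin 2) F)⁻¹ = !![1, -α; 0, 1] := by
      apply Matrix.inv_eq_right_inv
      ext i j
      fin_cases i <;> fin_cases j <;>
        simp [Matrix.mul_apply, Fin.sum_univ_two, Matrix.one_apply]
    have hY0inv : (!![1, 0; 1, 1] : Matrix (Fin 2) (Fin 2) F)⁻¹ = !![1, 0; -1, 1] := by
      apply Matrix.inv_eq_right_inv
      ext i j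
      fin_cases i <;> fin_cases j <;>
        simp [Matrix.mul_apply, Fin.sum_univ_two, Matrix.one_apply]
    refine ⟨!![1, α; 0, 1], !![1, 0; 1, 1], ⟨?_, ?_⟩, ⟨?_, ?_⟩, ?_⟩
    · intro h
      apply hα
      have h2 := congrFun (congrFun h 0) 1
      simpa [Matrix.one_apply] using h2
    · ext i j
      fin_cases i <;> fin_cases j <;>
        simp [sq, Matrix.mul_apply, Fin.sum_univ_two, Matrix.sub_apply, Matrix.one_apply]
    · intro h
      have h2 := congrFun (congrFun h 1) 0
      simp [Matrix.one_apply] at h2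
    · ext i j
      fin_cases i <;> fin_cases j <;>
        simp [sq, Matrix.mul_apply, Fin.sum_univ_two, Matrix.sub_apply, Matrix.one_apply]
    · rw [hX0inv, hY0inv, hK]
      ext i j
      fin_cases i <;> fin_cases j <;>
        simp [Matrix.mul_apply, Fin.sum_univ_two] <;> ring
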